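/- Let Σ_1, Σ_2 be finite alphabets, let b ≥ 3, t_1 ≥ 1, and t = t_1·(b−2). Let s ∈ Σ_1^ℓ be a (b,1)-constrained de Bruijn sequence and let C ⊆ Σ_2^ℓ be a code in which any two distinct codewords have Hamming distance at least t+1. For c ∈ C define f(c) ∈ (Σ_2 × Σ_1)^ℓ by f(c)_i = (c_i, s_i). Suppose c, c' ∈ C and m, m' : {1,…,ℓ} → ℕ are multiplicity functions whose zero sets are each a union of at most t_1 sets of consecutive integers of size at most b−2 each (arbitrary values m(i) ≥ 1 elsewhere). If the received words f(c)(m) and f(c')(m') (obtained by writing m(i), resp. m'(i), copies of the i-th symbol) are equal, then c = c'. In other words, the code { f(c) : c ∈ C } corrects any number of sticky insertions together with any t_1 bursts of deletions, each burst of length at most b−2. -/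

import Mathlib

/-- The window `s[i, i+k-1]` (0-based start `i`, length `k`). -/
def window {A : Type*} (s : List A) (i k : ℕ) : List A := (s.drop i).take k

/-- `s` is a `(b,k)`-constrained de Bruijn sequence: any two windows of length `k`
starting at distinct positions at distance at most `b-1` are distinct. -/
def IsCDB {A : Type*} (s : List A) (b k : ℕ) : Prop :=
  ∀ i j : ℕ, i < j → j - i ≤ b - 1 → j + k ≤ s.length → window s i k ≠ window s j k

/-- The received word obtained by reading the symbol at (0-based) position `i` of `s`
exactly `m i` times, in order (`m i = 0` is a deletion, `m i ≥ 2` sticky insertions). -/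
def expand {A : Type*} (s : List A) (m : ℕ → ℕ) : List A :=
  (s.zipIdx.map fun p => List.replicate (m p.2) p.1).flatten

/-- Hamming distance between two words of the same length. -/
def hdist {B : Type*} [DecidableEq B] (x y : List B) : ℕ :=
  (List.zipWith (fun a b => if a = b then 0 else 1) x y).sum

/-- Within positions `{0,…,ℓ-1}`, the zero set of the multiplicity function `m` is
a union of at most `t₁` bursts (sets of consecutive integers), each of size at
most `w`, with no run of `w+1` consecutive zero positions (bursts are separated). -/
def ZeroBurst (m : ℕ → ℕ) (t₁ w ℓ : ℕ) : Prop :=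
  (∃ l : List (ℕ × ℕ), l.length ≤ t₁ ∧ (∀ p ∈ l, p.2 ≤ w) ∧
      ∀ i : ℕ, i < ℓ → (m i = 0 ↔ ∃ p ∈ l, p.1 ≤ i ∧ i < p.1 + p.2))
    ∧ ¬ ∃ j : ℕ, j + (w + 1) ≤ ℓ ∧ ∀ u : ℕ, u ≤ w → m (j + u) = 0

/-! ### Auxiliary machinery -/

section Aux

/-- `GapOK w p L` : the first element of `L` lies in `[p, p+w]`, and each later
element lies within `w` of the successor of its predecessor. -/
def GapOK (w : ℕ) : ℕ → List ℕ → Prop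
  | _, [] => True
  | p, k :: t => p ≤ k ∧ k ≤ p + w ∧ GapOK w (k + 1) t

lemma expand_shift {γ : Type*} :
    ∀ (l : List γ) (k : ℕ) (m : ℕ → ℕ),
      ((l.zipIdx k).map fun p => List.replicate (m p.2) p.1).flatten
        = ((l.zipIdx).map fun p => List.replicate (m (p.2 + k)) p.1).flatten := by
  intro l
  induction l with
  | nil => intro k m; simp
  | cons a t ih =>
    intro k m
    rw [List.zipIdx_cons, List.zipIdx_cons]
    simp only [List.map_cons, List.flatten_cons, Nat.zero_add]
    congr 1
    · rw [ih (k + 1) m, ih 1 (fun i => m (i + k))]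
      congr 1
      apply List.map_congr_left
      intro p _
      have hpe : p.2 + (k + 1) = p.2 + 1 + k := by omega
      rw [hpe]

lemma expand_cons {γ : Type*} (a : γ) (l : List γ) (m : ℕ → ℕ) :
    expand (a :: l) m = List.replicate (m 0) a ++ expand l (fun i => m (i + 1)) := by
  unfold expand
  rw [List.zipIdx_cons]
  simp only [List.map_cons, List.flatten_cons, Nat.zero_add]
  congr 1
  rw [expand_shift l 1 m]

lemma filter_map_succ (q : ℕ → Bool) (L : List ℕ) :
    (L.map Nat.succ).filter q = (L.filter (fun i => q (Nat.succ i))).map Nat.succ := by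
  induction L with
  | nil => rfl
  | cons a t ih =>
    by_cases h : q (Nat.succ a) <;> simp [List.filter_cons, h, ih]

/-- The expansion, with `some` applied to every letter, is the concatenation over
kept positions of replicated `get?` values. -/
lemma expand_some {γ : Type*} :
    ∀ (E : List γ) (m : ℕ → ℕ),
      (expand E m).map some
        = (((List.range E.length).filter (fun i => m i ≠ 0)).map
            (fun i => List.replicate (m i) (E[i]?))).flatten := by
  intro E
  induction E with
  | nil => intro m; simp [expand]
  | cons a l ih =>
    intro m
    rw [expand_cons, List.map_append, ih (fun i => m (i + 1)), List.length_cons,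
      List.range_succ_eq_map]
    by_cases h0 : m 0 = 0
    · rw [List.filter_cons_of_neg (by simp [h0]), filter_map_succ, List.map_map, h0]
      simp only [List.replicate_zero, List.map_nil, List.nil_append]
      congr 1
    · rw [List.filter_cons_of_pos (by simp [h0]), filter_map_succ, List.map_cons, List.map_map,
        List.flatten_cons]
      congr 1
      simp [List.map_replicate]

/-- If a concatenation of (nonempty) replicated blocks is empty, there are no blocks. -/
lemma flat_rep_nil {δ : Type*} (q : List (δ × ℕ)) (hq : ∀ p ∈ q, 1 ≤ p.2)
    (h : (q.map fun p => List.replicate p.2 p.1).flatten = []) : q = [] := by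
  cases q with
  | nil => rfl
  | cons p t =>
    exfalso
    simp only [List.map_cons, List.flatten_cons, List.append_eq_nil_iff] at h
    have h1 := hq p (List.mem_cons_self)
    have h2 : p.2 = 0 := by
      have := congrArg List.length h.1
      simpa using this
    omega

lemma flat_rep_head {δ : Type*} (p : δ × ℕ) (t : List (δ × ℕ)) (h1 : 1 ≤ p.2) :
    ((( p :: t).map fun r => List.replicate r.2 r.1).flatten).head? = some p.1 := by
  obtain ⟨k, hk⟩ : ∃ k, p.2 = k + 1 := ⟨p.2 - 1, by omega⟩
  simp only [List.map_cons, List.flatten_cons, hk, List.replicate_succ, List.cons_append,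
    List.head?_cons]

lemma strip_replicate {δ : Type*} (a : δ) :
    ∀ (n n' : ℕ) (X Y : List δ), X.head? ≠ some a → Y.head? ≠ some a →
      List.replicate n a ++ X = List.replicate n' a ++ Y → X = Y := by
  intro n
  induction n with
  | zero =>
    intro n' X Y hX hY h
    cases n' with
    | zero => simpa using h
    | succ k =>
      rw [List.replicate_zero, List.nil_append, List.replicate_succ, List.cons_append] at h
      exfalso; apply hX; rw [h]; rfl
  | succ n ih =>
    intro n' X Y hX hY h
    cases n' with
    | zero =>
      rw [List.replicate_zero, List.nil_append, List.replicate_succ, List.cons_append] at h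
      exfalso; apply hY; rw [← h]; rfl
    | succ k =>
      rw [List.replicate_succ, List.replicate_succ, List.cons_append, List.cons_append] at h
      have h2 : List.replicate n a ++ X = List.replicate k a ++ Y := by
        injection h
      exact ih k X Y hX hY h2

/-- Cancellation: the sequence of block values is determined by the concatenation of
replicated blocks, provided adjacent blocks have distinct values and all blocks are
nonempty. -/
lemma cancel {δ : Type*} :
    ∀ (q q' : List (δ × ℕ)), (∀ p ∈ q, 1 ≤ p.2) → (∀ p ∈ q', 1 ≤ p.2) →
      List.IsChain (fun x y => x.1 ≠ y.1) q → List.IsChain (fun x y => x.1 ≠ y.1) q' →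
      (q.map fun p => List.replicate p.2 p.1).flatten
        = (q'.map fun p => List.replicate p.2 p.1).flatten →
      q.map Prod.fst = q'.map Prod.fst := by
  intro q
  induction q with
  | nil =>
    intro q' _ hq' _ _ h
    rw [flat_rep_nil q' hq' (by simpa using h.symm)]
  | cons p t ih =>
    intro q' hq hq' hch hch' h
    cases q' with
    | nil =>
      exfalso
      have := flat_rep_nil (p :: t) hq (by simpa using h)
      simp at this
    | cons p' t' =>
      have hp2 : 1 ≤ p.2 := hq p (List.mem_cons_self)
      have hp'2 : 1 ≤ p'.2 := hq' p' (List.mem_cons_self)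
      have hhead : p.1 = p'.1 := by
        have h1 := flat_rep_head p t hp2
        have h2 := flat_rep_head p' t' hp'2
        rw [h] at h1
        rw [h1] at h2
        injection h2
      -- head? facts for tails
      have htail : ∀ (u : List (δ × ℕ)) (a : δ), (∀ r ∈ u, 1 ≤ r.2) →
          (∀ y ∈ u.head?, (fun x y : δ × ℕ => x.1 ≠ y.1) (a, 1) y) →
          ((u.map fun r => List.replicate r.2 r.1).flatten).head? ≠ some a := by
        intro u a hu hne
        cases u with
        | nil => simp
        | cons r u' =>
          rw [flat_rep_head r u' (hu r (List.mem_cons_self))]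
          intro hcontra
          have hra : r.1 = a := by injection hcontra
          have := hne r (by simp)
          simp at this
          exact this hra.symm
      have hchh := (List.isChain_cons.mp hch)
      have hchh' := (List.isChain_cons.mp hch')
      have hXh : ((t.map fun r => List.replicate r.2 r.1).flatten).head? ≠ some p.1 := by
        apply htail t p.1 (fun r hr => hq r (List.mem_cons_of_mem _ hr))
        intro y hy
        exact (hchh.1 y hy)
      have hYh : ((t'.map fun r => List.replicate r.2 r.1).flatten).head? ≠ some p.1 := by
        apply htail t' p.1 (fun r hr => hq' r (List.mem_cons_of_mem _ hr))
        intro y hy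
        have := hchh'.1 y hy
        rwa [← hhead] at this
      have hT : (t.map fun r => List.replicate r.2 r.1).flatten
          = (t'.map fun r => List.replicate r.2 r.1).flatten := by
        apply strip_replicate p.1 p.2 p'.2 _ _ hXh hYh
        simp only [List.map_cons, List.flatten_cons] at h
        rw [← hhead] at h
        exact h
      have := ih t' (fun r hr => hq r (List.mem_cons_of_mem _ hr))
        (fun r hr => hq' r (List.mem_cons_of_mem _ hr)) hchh.2 hchh'.2 hT
      simp only [List.map_cons, this, hhead]

/-- `get?` of a zip. -/
lemma zip_get? {A B : Type*} :
    ∀ (c : List B) (s : List A) (i : ℕ), i < c.length → i < s.length →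
      ∃ x y, (c)[i]? = some x ∧ s[i]? = some y ∧ (c.zip s)[i]? = some (x, y) := by
  intro c
  induction c with
  | nil => intro s i h; simp at h
  | cons a cs ih =>
    intro s i h1 h2
    cases s with
    | nil => simp at h2
    | cons e ss =>
      cases i with
      | zero => exact ⟨a, e, rfl, rfl, rfl⟩
      | succ i =>
        obtain ⟨x, y, hx, hy, hxy⟩ := ih ss i (by simpa using h1) (by simpa using h2)
        exact ⟨x, y, by simpa using hx, by simpa using hy, by simpa [List.zip_cons_cons] using hxy⟩

/-- Constrained de Bruijn for `k = 1`: nearby positions carry distinct symbols. -/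
lemma sNe {A : Type*} {s : List A} {b ℓ : ℕ} (hslen : s.length = ℓ) (hs : IsCDB s b 1) :
    ∀ i j, i < j → j - i ≤ b - 1 → j < ℓ → s[i]? ≠ s[j]? := by
  have hwin : ∀ k, k < s.length → ∀ x, s[k]? = some x → window s k 1 = [x] := by
    intro k hk x hx
    unfold window
    cases hdrop : s.drop k with
    | nil =>
      exfalso
      have := List.drop_eq_nil_iff.mp hdrop
      omega
    | cons z r =>
      have hthis : (s.drop k)[0]? = s[k]? := by
        rw [List.getElem?_drop, Nat.add_zero]
      rw [hdrop] at hthis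
      simp only [List.getElem?_cons_zero] at hthis
      rw [hx] at hthis
      have hz : z = x := by injection hthis
      simp [hz]
  intro i j hij hb hjl heq
  have hi : i < s.length := by omega
  have hj : j < s.length := by omega
  obtain ⟨x, hx⟩ : ∃ x, s[i]? = some x := by
    rw [List.getElem?_eq_getElem hi]; exact ⟨_, rfl⟩
  apply hs i j hij hb (by omega)
  rw [hwin i hi x hx, hwin j hj x (heq ▸ hx)]

/-- First-burst-position lemma: `GapOK` holds for the kept-position list. -/
lemma gapAux (m : ℕ → ℕ) (w ℓ : ℕ)
    (Hrun : ∀ j, j + (w + 1) ≤ ℓ → ∃ u, u ≤ w ∧ m (j + u) ≠ 0) :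
    ∀ (L : List ℕ) (p : ℕ), L.Pairwise (· < ·) →
      (∀ i, p ≤ i → i < ℓ → (m i ≠ 0 ↔ i ∈ L)) →
      (∀ k ∈ L, k < ℓ) → (∀ k ∈ L, p ≤ k) → GapOK w p L := by
  intro L
  induction L with
  | nil => intro p _ _ _ _; trivial
  | cons k t ih =>
    intro p hsort hchar hlt hge
    have hkl : k < ℓ := hlt k (List.mem_cons_self)
    have hpk : p ≤ k := hge k (List.mem_cons_self)
    have hkt : ∀ i ∈ t, k < i := by
      intro i hi
      exact (List.pairwise_cons.mp hsort).1 i hi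
    refine ⟨hpk, ?_, ?_⟩
    · by_cases hc : p + (w + 1) ≤ ℓ
      · obtain ⟨u, hu, hmu⟩ := Hrun p hc
        have hmem : p + u ∈ k :: t := (hchar (p + u) (by omega) (by omega)).mp hmu
        have : k ≤ p + u := by
          rcases List.mem_cons.mp hmem with h | h
          · omega
          · have := hkt _ h; omega
        omega
      · omega
    · apply ih (k + 1) (List.pairwise_cons.mp hsort).2
      · intro i hi hil
        constructor
        · intro hmi
          have : i ∈ k :: t := (hchar i (by omega) hil).mp hmi
          rcases List.mem_cons.mp this with h | h
          · omega
          · exact h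
        · intro hit
          exact (hchar i (by omega) hil).mpr (List.mem_cons_of_mem _ hit)
      · intro x hx; exact hlt x (List.mem_cons_of_mem _ hx)
      · intro x hx; have := hkt x hx; omega

/-- Adjacent kept positions carry distinct `g`-values. -/
lemma chainK {γ : Type*} (g : ℕ → Option γ) (ℓ w : ℕ)
    (hgw : ∀ i j, i < j → j ≤ i + w + 1 → i < ℓ → j < ℓ → g i ≠ g j) :
    ∀ (K : List ℕ) (p : ℕ), GapOK w p K → (∀ k ∈ K, k < ℓ) →
      List.IsChain (fun i j => g i ≠ g j) K := by
  intro K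
  induction K with
  | nil => intro p _ _; exact List.isChain_nil
  | cons k t ih =>
    intro p hgap hlt
    rcases hgap with ⟨h1, h2, h3⟩
    rw [List.isChain_cons]
    constructor
    · intro y hy
      cases t with
      | nil => simp at hy
      | cons y' t' =>
        simp only [List.head?_cons, Option.mem_def, Option.some_inj] at hy
        rcases h3 with ⟨h4, h5, _⟩
        rw [hy] at h4 h5
        exact hgw k y (by omega) (by omega) (hlt k (List.mem_cons_self))
          (hlt y (by rw [← hy]; exact List.mem_cons_of_mem _ (List.mem_cons_self)))
    · exact ih (k + 1) h3 (fun x hx => hlt x (List.mem_cons_of_mem _ hx))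

/-- Two kept-position lists with equal value sequences are equal. -/
lemma eqIdx {γ : Type*} (g g' : ℕ → Option γ) (ℓ w : ℕ)
    (hne : ∀ i j, i ≠ j → i < ℓ → j < ℓ → i ≤ j + w → j ≤ i + w → g i ≠ g' j) :
    ∀ (K K' : List ℕ) (p : ℕ), GapOK w p K → GapOK w p K' →
      (∀ k ∈ K, k < ℓ) → (∀ k ∈ K', k < ℓ) →
      K.map g = K'.map g' → K = K' := by
  intro K
  induction K with
  | nil =>
    intro K' p _ _ _ _ h
    cases K' with
    | nil => rfl
    | cons k t => simp at h
  | cons k t ih =>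
    intro K' p hgap hgap' hlt hlt' h
    cases K' with
    | nil => simp at h
    | cons k' t' =>
      simp only [List.map_cons, List.cons.injEq] at h
      rcases hgap with ⟨h1, h2, h3⟩
      rcases hgap' with ⟨h1', h2', h3'⟩
      have hkk : k = k' := by
        by_contra hc
        exact hne k k' hc (hlt k (List.mem_cons_self)) (hlt' k' (List.mem_cons_self))
          (by omega) (by omega) h.1
      subst hkk
      rw [ih t' (k + 1) h3 h3' (fun x hx => hlt x (List.mem_cons_of_mem _ hx))
        (fun x hx => hlt' x (List.mem_cons_of_mem _ hx)) h.2]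

/-- Hamming distance is at most the number of positions allowed to differ. -/
lemma hdist_le {B : Type*} [DecidableEq B] :
    ∀ (x y : List B) (m : ℕ → ℕ),
      (∀ i, i < x.length → x[i]? ≠ y[i]? → m i = 0) →
      hdist x y ≤ (List.range x.length).countP (fun i => m i = 0) := by
  intro x
  induction x with
  | nil => intro y m _; simp [hdist]
  | cons a xs ih =>
    intro y m h
    cases y with
    | nil => simp [hdist]
    | cons a' ys =>
      have hd : hdist (a :: xs) (a' :: ys) = (if a = a' then 0 else 1) + hdist xs ys := by
        simp [hdist]
      rw [hd]
      rw [List.length_cons, List.range_succ_eq_map, List.countP_cons, List.countP_map]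
      have hIH : hdist xs ys
          ≤ List.countP (fun i => decide (m (i + 1) = 0)) (List.range xs.length) := by
        simpa using ih ys (fun i => m (i + 1)) (by
          intro i hi hne
          exact h (i + 1) (by simpa using Nat.succ_lt_succ hi) (by simpa using hne))
      have hhead : (if a = a' then 0 else 1) ≤ (if (decide (m 0 = 0)) = true then 1 else 0) := by
        by_cases hc : a = a'
        · simp [hc]
        · have : m 0 = 0 := h 0 (by simp) (by simp [hc])
          simp [hc, this]
      have : List.countP ((fun i => decide (m i = 0)) ∘ Nat.succ) (List.range xs.length)
          = List.countP (fun i => decide (m (i + 1) = 0)) (List.range xs.length) := by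
        apply List.countP_congr
        intro i _
        simp [Nat.succ_eq_add_one]
      omega
  
/-- The number of zero positions is at most `t₁ * w`. -/
lemma zerocount (m : ℕ → ℕ) (t₁ w ℓ : ℕ) (l : List (ℕ × ℕ)) (hlen : l.length ≤ t₁)
    (hw : ∀ p ∈ l, p.2 ≤ w)
    (hchar : ∀ i, i < ℓ → (m i = 0 ↔ ∃ p ∈ l, p.1 ≤ i ∧ i < p.1 + p.2)) :
    (List.range ℓ).countP (fun i => m i = 0) ≤ t₁ * w := by
  rw [List.countP_eq_length_filter]
  set Z := (List.range ℓ).filter (fun i => decide (m i = 0)) with hZ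
  have hnd : Z.Nodup := List.nodup_range.filter _
  have hcard : Z.length = Z.toFinset.card := (List.toFinset_card_of_nodup hnd).symm
  rw [hcard]
  have hsub : Z.toFinset ⊆ l.toFinset.biUnion (fun p => Finset.Ico p.1 (p.1 + p.2)) := by
    intro i hi
    rw [List.mem_toFinset, hZ, List.mem_filter] at hi
    have hil : i < ℓ := List.mem_range.mp hi.1
    have hmi : m i = 0 := by simpa using hi.2
    obtain ⟨p, hp, hp1, hp2⟩ := (hchar i hil).mp hmi
    exact Finset.mem_biUnion.mpr ⟨p, List.mem_toFinset.mpr hp, Finset.mem_Ico.mpr ⟨hp1, hp2⟩⟩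
  calc Z.toFinset.card ≤ (l.toFinset.biUnion (fun p => Finset.Ico p.1 (p.1 + p.2))).card :=
        Finset.card_le_card hsub
    _ ≤ ∑ p ∈ l.toFinset, (Finset.Ico p.1 (p.1 + p.2)).card := Finset.card_biUnion_le
    _ ≤ l.toFinset.card * w := by
        have := Finset.sum_le_card_nsmul l.toFinset (fun p => (Finset.Ico p.1 (p.1 + p.2)).card) w
          (by
            intro p hp
            have := hw p (List.mem_toFinset.mp hp)
            simp [Nat.card_Ico]
            omega)
        simpa [smul_eq_mul] using this
    _ ≤ l.length * w := Nat.mul_le_mul_right w (List.toFinset_card_le l)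
    _ ≤ t₁ * w := Nat.mul_le_mul_right w hlen

end Aux

theorem stmt17 {A B : Type*} [DecidableEq B] (b t₁ ℓ : ℕ) (hb : 3 ≤ b) (ht₁ : 1 ≤ t₁)
    (s : List A) (hslen : s.length = ℓ) (hs : IsCDB s b 1)
    (C : Set (List B)) (hClen : ∀ c ∈ C, c.length = ℓ)
    (hCdist : ∀ c ∈ C, ∀ c' ∈ C, c ≠ c' → t₁ * (b - 2) + 1 ≤ hdist c c')
    (c c' : List B) (hc : c ∈ C) (hc' : c' ∈ C)
    (m m' : ℕ → ℕ)
    (hm : ZeroBurst m t₁ (b - 2) ℓ) (hm' : ZeroBurst m' t₁ (b - 2) ℓ)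
    (heq : expand (c.zip s) m = expand (c'.zip s) m') :
    c = c' := by
  set w := b - 2 with hw
  have hcl : c.length = ℓ := hClen c hc
  have hc'l : c'.length = ℓ := hClen c' hc'
  set E := c.zip s with hE
  set E' := c'.zip s with hE'
  have hEl : E.length = ℓ := by rw [hE, List.length_zip, hcl, hslen, min_self]
  have hE'l : E'.length = ℓ := by rw [hE', List.length_zip, hc'l, hslen, min_self]
  have hsne := sNe hslen hs
  -- kept position lists
  set K := (List.range ℓ).filter (fun i => decide (m i ≠ 0)) with hK
  set K' := (List.range ℓ).filter (fun i => decide (m' i ≠ 0)) with hK'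
  have hKmem : ∀ i, i ∈ K ↔ i < ℓ ∧ m i ≠ 0 := by
    intro i; rw [hK, List.mem_filter, List.mem_range]; simp
  have hK'mem : ∀ i, i ∈ K' ↔ i < ℓ ∧ m' i ≠ 0 := by
    intro i; rw [hK', List.mem_filter, List.mem_range]; simp
  have hKlt : ∀ k ∈ K, k < ℓ := fun k hk => ((hKmem k).mp hk).1
  have hK'lt : ∀ k ∈ K', k < ℓ := fun k hk => ((hK'mem k).mp hk).1
  have hKsort : K.Pairwise (· < ·) :=
    List.Pairwise.sublist List.filter_sublist List.pairwise_lt_range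
  have hK'sort : K'.Pairwise (· < ·) :=
    List.Pairwise.sublist List.filter_sublist List.pairwise_lt_range
  -- GapOK
  have Hrun : ∀ j, j + (w + 1) ≤ ℓ → ∃ u, u ≤ w ∧ m (j + u) ≠ 0 := by
    intro j hj
    by_contra hcon
    push_neg at hcon
    exact hm.2 ⟨j, hj, fun u hu => hcon u hu⟩
  have Hrun' : ∀ j, j + (w + 1) ≤ ℓ → ∃ u, u ≤ w ∧ m' (j + u) ≠ 0 := by
    intro j hj
    by_contra hcon
    push_neg at hcon
    exact hm'.2 ⟨j, hj, fun u hu => hcon u hu⟩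
  have hKgap : GapOK w 0 K :=
    gapAux m w ℓ Hrun K 0 hKsort
      (fun i _ hil => ⟨fun hmi => (hKmem i).mpr ⟨hil, hmi⟩, fun hi => ((hKmem i).mp hi).2⟩)
      hKlt (fun k _ => Nat.zero_le k)
  have hK'gap : GapOK w 0 K' :=
    gapAux m' w ℓ Hrun' K' 0 hK'sort
      (fun i _ hil => ⟨fun hmi => (hK'mem i).mpr ⟨hil, hmi⟩, fun hi => ((hK'mem i).mp hi).2⟩)
      hK'lt (fun k _ => Nat.zero_le k)
  -- s-components of E and E'
  have hcomp : ∀ i j, i < ℓ → j < ℓ → E[i]? = E'[j]? → s[i]? = s[j]? := by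
    intro i j hi hj hgij
    obtain ⟨x, y, hx, hy, hxy⟩ := zip_get? c s i (by omega) (by omega)
    obtain ⟨x', y', hx', hy', hxy'⟩ := zip_get? c' s j (by omega) (by omega)
    rw [← hE] at hxy; rw [← hE'] at hxy'
    rw [hxy, hxy'] at hgij
    have : (x, y) = (x', y') := by injection hgij
    rw [hy, hy', (Prod.mk.injEq _ _ _ _).mp this |>.2]
  have hcompE : ∀ i j, i < ℓ → j < ℓ → E[i]? = E[j]? → s[i]? = s[j]? := by
    intro i j hi hj hgij
    obtain ⟨x, y, hx, hy, hxy⟩ := zip_get? c s i (by omega) (by omega)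
    obtain ⟨x', y', hx', hy', hxy'⟩ := zip_get? c s j (by omega) (by omega)
    rw [← hE] at hxy hxy'
    rw [hxy, hxy'] at hgij
    have : (x, y) = (x', y') := by injection hgij
    rw [hy, hy', (Prod.mk.injEq _ _ _ _).mp this |>.2]
  have hcompE' : ∀ i j, i < ℓ → j < ℓ → E'[i]? = E'[j]? → s[i]? = s[j]? := by
    intro i j hi hj hgij
    obtain ⟨x, y, hx, hy, hxy⟩ := zip_get? c' s i (by omega) (by omega)
    obtain ⟨x', y', hx', hy', hxy'⟩ := zip_get? c' s j (by omega) (by omega)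
    rw [← hE'] at hxy hxy'
    rw [hxy, hxy'] at hgij
    have : (x, y) = (x', y') := by injection hgij
    rw [hy, hy', (Prod.mk.injEq _ _ _ _).mp this |>.2]
  -- cancellation
  have hflat : ((K.map fun i => ((E[i]?, m i) : Option (B × A) × ℕ)).map
        fun p => List.replicate p.2 p.1).flatten
      = ((K'.map fun i => ((E'[i]?, m' i) : Option (B × A) × ℕ)).map
        fun p => List.replicate p.2 p.1).flatten := by
    rw [List.map_map, List.map_map]
    have e1 : (expand E m).map some = (K.map fun i => List.replicate (m i) (E[i]?)).flatten := by
      rw [expand_some E m, hEl]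
    have e2 : (expand E' m').map some
        = (K'.map fun i => List.replicate (m' i) (E'[i]?)).flatten := by
      rw [expand_some E' m', hE'l]
    have : (expand E m).map some = (expand E' m').map some := by rw [heq]
    rw [e1, e2] at this
    simpa [Function.comp_def] using this
  have hchainK : List.IsChain (fun i j => E[i]? ≠ E[j]?) K := by
    apply chainK (fun i => E[i]?) ℓ w _ K 0 hKgap hKlt
    intro i j hij hji hi hj hgeq
    exact hsne i j hij (by omega) hj (hcompE i j hi hj hgeq)
  have hchainK' : List.IsChain (fun i j => E'[i]? ≠ E'[j]?) K' := by
    apply chainK (fun i => E'[i]?) ℓ w _ K' 0 hK'gap hK'lt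
    intro i j hij hji hi hj hgeq
    exact hsne i j hij (by omega) hj (hcompE' i j hi hj hgeq)
  have hmaps : K.map (fun i => E[i]?) = K'.map (fun i => E'[i]?) := by
    have := cancel (K.map fun i => ((E[i]?, m i) : Option (B × A) × ℕ))
      (K'.map fun i => ((E'[i]?, m' i) : Option (B × A) × ℕ))
      (by
        intro p hp
        obtain ⟨i, hi, rfl⟩ := List.mem_map.mp hp
        have := ((hKmem i).mp hi).2
        simpa using Nat.one_le_iff_ne_zero.mpr this)
      (by
        intro p hp
        obtain ⟨i, hi, rfl⟩ := List.mem_map.mp hp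
        have := ((hK'mem i).mp hi).2
        simpa using Nat.one_le_iff_ne_zero.mpr this)
      (by
        rw [List.isChain_map]
        exact hchainK)
      (by
        rw [List.isChain_map]
        exact hchainK')
      hflat
    simpa [List.map_map, Function.comp_def] using this
  -- equal kept positions
  have hKK' : K = K' := by
    apply eqIdx (fun i => E[i]?) (fun i => E'[i]?) ℓ w _ K K' 0
      hKgap hK'gap hKlt hK'lt hmaps
    intro i j hij hi hj h1 h2 hgeq
    have hseq := hcomp i j hi hj hgeq
    rcases Nat.lt_or_ge i j with hlt | hge
    · exact hsne i j hlt (by omega) hj hseq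
    · have hlt2 : j < i := by omega
      exact hsne j i hlt2 (by omega) hi hseq.symm
  -- pointwise equality on kept positions
  have hpt : ∀ i ∈ K, E[i]? = E'[i]? := by
    rw [hKK'] at hmaps
    exact fun i hi => (List.map_eq_map_iff.mp hmaps) i (hKK' ▸ hi)
  -- Hamming distance bound
  have hhd : hdist c c' ≤ (List.range ℓ).countP (fun i => m i = 0) := by
    have := hdist_le c c' m (by
      intro i hil hne2
      by_contra hmi
      have hiK : i ∈ K := (hKmem i).mpr ⟨by omega, hmi⟩
      have hEe := hpt i hiK
      obtain ⟨x, y, hx, hy, hxy⟩ := zip_get? c s i (by omega) (by omega)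
      obtain ⟨x', y', hx', hy', hxy'⟩ := zip_get? c' s i (by omega) (by omega)
      rw [← hE] at hxy; rw [← hE'] at hxy'
      rw [hxy, hxy'] at hEe
      have hp : (x, y) = (x', y') := by injection hEe
      apply hne2
      rw [hx, hx', (Prod.mk.injEq _ _ _ _).mp hp |>.1])
    rwa [hcl] at this
  obtain ⟨l, hlen, hwid, hchar⟩ := hm.1
  have hcount : (List.range ℓ).countP (fun i => m i = 0) ≤ t₁ * w :=
    zerocount m t₁ w ℓ l hlen hwid hchar
  by_contra hne
  have := hCdist c hc c' hc' hne
  omega
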